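/- Under assumptions (A1)–(A4) with μ > 2, for every (f1,f2) ∈ 𝒦 and every η ∈ [s0,r0] one has (K1m/(μ+ν−1))·(s0^(−(μ+ν−1)) − η^(−(μ+ν−1))) ≤ H1(η; f1,f2) ≤ H1sup, where H1sup = K1M/(E1inf·(μ+ν−1)·s0^(μ+ν−1)), E1inf = exp(−[a·N1M/(L1m·(μ−1)·s0^(2μ−2)) + D1·K1M/(H_inf·L1m·(2μ+ν−1)·s0^(2μ+ν−1))]) and H_inf = (K1m/(μ+ν−1))·(s0^(−(μ+ν−1)) − r0^(−(μ+ν−1))). -/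

import Mathlib

open MeasureTheory Filter Topology

noncomputable section

/-- The bundle of fixed constants of the problem. -/
structure Cst where
  nu : ℝ
  mu : ℝ
  a : ℝ
  D1 : ℝ
  D2 : ℝ
  Q : ℝ
  D1s : ℝ
  D2s : ℝ
  L1m : ℝ
  L1M : ℝ
  N1m : ℝ
  N1M : ℝ
  K1m : ℝ
  K1M : ℝ
  L2m : ℝ
  L2M : ℝ
  N2m : ℝ
  N2M : ℝ
  K2m : ℝ
  K2M : ℝ
  Lt1 : ℝ
  Nt1 : ℝ
  Kt1 : ℝ
  Lt2 : ℝ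
  Nt2 : ℝ
  Kt2 : ℝ

/-- The space `C[s0,r0]`, modeled as real functions continuous on `[s0,r0]`. -/
def C1 (s0 r0 : ℝ) : Set (ℝ → ℝ) := {f | ContinuousOn f (Set.Icc s0 r0)}

/-- The set `ℳ ⊆ C_b[r0,∞)`: bounded continuous functions on `[r0,∞)` with
`f(r0) = 0` and `f(η) → -1` as `η → ∞`. -/
def Mset (r0 : ℝ) : Set (ℝ → ℝ) :=
  {f | ContinuousOn f (Set.Ici r0) ∧ (∃ C, ∀ x ∈ Set.Ici r0, |f x| ≤ C) ∧
    f r0 = 0 ∧ Tendsto f atTop (𝓝 (-1))}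

/-- Sup norm of `f` over the set `S`. -/
def supOn (S : Set ℝ) (f : ℝ → ℝ) : ℝ := ⨆ x : S, |f x.1|

/-- Norm of the difference of two pairs in `𝒦 = C[s0,r0] × ℳ`. -/
def pairNorm (s0 r0 : ℝ) (f1 f2 g1 g2 : ℝ → ℝ) : ℝ :=
  max (supOn (Set.Icc s0 r0) (f1 - g1)) (supOn (Set.Ici r0) (f2 - g2))

/-- Positivity assumptions on all the fixed constants and on `s0, r0`. -/
def PosC (c : Cst) (s0 r0 : ℝ) : Prop :=
  0 < c.a ∧ 0 < c.nu ∧ c.nu < 1 ∧ 2 < c.mu ∧ 0 < s0 ∧ s0 < r0 ∧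
  0 < c.D1 ∧ 0 < c.D2 ∧ 0 < c.Q ∧ 0 < c.D1s ∧ 0 < c.D2s ∧
  0 < c.L1m ∧ 0 < c.L1M ∧ 0 < c.N1m ∧ 0 < c.N1M ∧ 0 < c.K1m ∧ 0 < c.K1M ∧
  0 < c.L2m ∧ 0 < c.L2M ∧ 0 < c.N2m ∧ 0 < c.N2M ∧ 0 < c.K2m ∧ 0 < c.K2M ∧
  0 < c.Lt1 ∧ 0 < c.Nt1 ∧ 0 < c.Kt1 ∧ 0 < c.Lt2 ∧ 0 < c.Nt2 ∧ 0 < c.Kt2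

/-- Positivity assumptions on all the fixed constants (no `s0, r0`). -/
def PosCst (c : Cst) : Prop :=
  0 < c.a ∧ 0 < c.nu ∧ c.nu < 1 ∧ 2 < c.mu ∧
  0 < c.D1 ∧ 0 < c.D2 ∧ 0 < c.Q ∧ 0 < c.D1s ∧ 0 < c.D2s ∧
  0 < c.L1m ∧ 0 < c.L1M ∧ 0 < c.N1m ∧ 0 < c.N1M ∧ 0 < c.K1m ∧ 0 < c.K1M ∧
  0 < c.L2m ∧ 0 < c.L2M ∧ 0 < c.N2m ∧ 0 < c.N2M ∧ 0 < c.K2m ∧ 0 < c.K2M ∧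
  0 < c.Lt1 ∧ 0 < c.Nt1 ∧ 0 < c.Kt1 ∧ 0 < c.Lt2 ∧ 0 < c.Nt2 ∧ 0 < c.Kt2

/-- Assumptions (A1)–(A4): continuity of the images of `L, N, K`, the two-sided
bounds and the Lipschitz bounds. -/
def Assum (c : Cst) (s0 r0 : ℝ) (L1 N1 K1 L2 N2 K2 : (ℝ → ℝ) → ℝ → ℝ) : Prop :=
  (∀ f1 ∈ C1 s0 r0,
    ContinuousOn (L1 f1) (Set.Icc s0 r0) ∧ ContinuousOn (N1 f1) (Set.Icc s0 r0) ∧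
      ContinuousOn (K1 f1) (Set.Icc s0 r0)) ∧
  (∀ f2 ∈ Mset r0,
    ContinuousOn (L2 f2) (Set.Ici r0) ∧ ContinuousOn (N2 f2) (Set.Ici r0) ∧
      ContinuousOn (K2 f2) (Set.Ici r0)) ∧
  (∀ f1 ∈ C1 s0 r0, ∀ η ∈ Set.Icc s0 r0,
    c.L1m * η ^ c.mu ≤ L1 f1 η ∧ L1 f1 η ≤ c.L1M * η ^ c.mu ∧
    c.N1m * η ^ (-c.mu) ≤ N1 f1 η ∧ N1 f1 η ≤ c.N1M * η ^ (-c.mu) ∧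
    c.K1m * η ^ (-c.mu) ≤ K1 f1 η ∧ K1 f1 η ≤ c.K1M * η ^ (-c.mu)) ∧
  (∀ f2 ∈ Mset r0, ∀ η ∈ Set.Ici r0,
    c.L2m * η ^ c.mu ≤ L2 f2 η ∧ L2 f2 η ≤ c.L2M * η ^ c.mu ∧
    c.N2m * η ^ (-c.mu) ≤ N2 f2 η ∧ N2 f2 η ≤ c.N2M * η ^ (-c.mu) ∧
    c.K2m * η ^ (-c.mu) ≤ K2 f2 η ∧ K2 f2 η ≤ c.K2M * η ^ (-c.mu)) ∧
  (∀ f1 ∈ C1 s0 r0, ∀ g1 ∈ C1 s0 r0, ∀ η ∈ Set.Icc s0 r0,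
    |L1 f1 η - L1 g1 η| ≤ c.Lt1 * supOn (Set.Icc s0 r0) (f1 - g1) ∧
    |N1 f1 η - N1 g1 η| ≤ c.Nt1 * supOn (Set.Icc s0 r0) (f1 - g1) ∧
    |K1 f1 η - K1 g1 η| ≤ c.Kt1 * η ^ (-c.mu) * supOn (Set.Icc s0 r0) (f1 - g1)) ∧
  (∀ f2 ∈ Mset r0, ∀ g2 ∈ Mset r0, ∀ η ∈ Set.Ici r0,
    |L2 f2 η - L2 g2 η| ≤ c.Lt2 * supOn (Set.Ici r0) (f2 - g2) ∧
    |N2 f2 η - N2 g2 η| ≤ c.Nt2 * supOn (Set.Ici r0) (f2 - g2) ∧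
    |K2 f2 η - K2 g2 η| ≤ c.Kt2 * η ^ (-c.mu) * supOn (Set.Ici r0) (f2 - g2))

/-- `H(f1,f2) = ∫_{s0}^{r0} K(f1)(v)/v^ν dv + ∫_{r0}^{∞} K(f2)(v)/v^ν dv`. -/
def Hf (c : Cst) (s0 r0 : ℝ) (L1 N1 K1 L2 N2 K2 : (ℝ → ℝ) → ℝ → ℝ) (f1 f2 : ℝ → ℝ) : ℝ :=
  (∫ v in s0..r0, K1 f1 v / v ^ c.nu) + ∫ v in Set.Ioi r0, K2 f2 v / v ^ c.nu

/-- `E1(η; f1,f2)`. -/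
def E1f (c : Cst) (s0 r0 : ℝ) (L1 N1 K1 L2 N2 K2 : (ℝ → ℝ) → ℝ → ℝ) (f1 f2 : ℝ → ℝ)
    (η : ℝ) : ℝ :=
  Real.exp (-(∫ v in s0..η,
    (2 * c.a * v * (N1 f1 v / L1 f1 v)
      + c.D1 / Hf c s0 r0 L1 N1 K1 L2 N2 K2 f1 f2 * (K1 f1 v / (L1 f1 v * v ^ c.nu)))))

/-- `Φ1(η; f1,f2)`. -/
def Phi1f (c : Cst) (s0 r0 : ℝ) (L1 N1 K1 L2 N2 K2 : (ℝ → ℝ) → ℝ → ℝ) (f1 f2 : ℝ → ℝ)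
    (η : ℝ) : ℝ :=
  ∫ v in s0..η, E1f c s0 r0 L1 N1 K1 L2 N2 K2 f1 f2 v / (L1 f1 v * v ^ c.nu)

/-- `H1(η; f1,f2)`. -/
def H1f (c : Cst) (s0 r0 : ℝ) (L1 N1 K1 L2 N2 K2 : (ℝ → ℝ) → ℝ → ℝ) (f1 f2 : ℝ → ℝ)
    (η : ℝ) : ℝ :=
  ∫ v in s0..η, K1 f1 v / (v ^ c.nu * E1f c s0 r0 L1 N1 K1 L2 N2 K2 f1 f2 v)

/-- `G1(η; f1,f2)`. -/
def G1f (c : Cst) (s0 r0 : ℝ) (L1 N1 K1 L2 N2 K2 : (ℝ → ℝ) → ℝ → ℝ) (f1 f2 : ℝ → ℝ)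
    (η : ℝ) : ℝ :=
  ∫ v in s0..η, E1f c s0 r0 L1 N1 K1 L2 N2 K2 f1 f2 v
    * H1f c s0 r0 L1 N1 K1 L2 N2 K2 f1 f2 v / (L1 f1 v * v ^ c.nu)

/-- `V1(f1,f2)(η)`. -/
def V1f (c : Cst) (s0 r0 : ℝ) (L1 N1 K1 L2 N2 K2 : (ℝ → ℝ) → ℝ → ℝ) (f1 f2 : ℝ → ℝ)
    (η : ℝ) : ℝ :=
  s0 ^ c.nu * c.Q * Real.exp (-s0 ^ 2)
      * (Phi1f c s0 r0 L1 N1 K1 L2 N2 K2 f1 f2 r0 - Phi1f c s0 r0 L1 N1 K1 L2 N2 K2 f1 f2 η)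
    + c.D1s / Hf c s0 r0 L1 N1 K1 L2 N2 K2 f1 f2 ^ 2
      * (G1f c s0 r0 L1 N1 K1 L2 N2 K2 f1 f2 r0 - G1f c s0 r0 L1 N1 K1 L2 N2 K2 f1 f2 η)

/-- `E2(η; f1,f2)`. -/
def E2f (c : Cst) (s0 r0 : ℝ) (L1 N1 K1 L2 N2 K2 : (ℝ → ℝ) → ℝ → ℝ) (f1 f2 : ℝ → ℝ)
    (η : ℝ) : ℝ :=
  Real.exp (-(∫ v in r0..η,
    (2 * c.a * v * (N2 f2 v / L2 f2 v)
      + c.D2 / Hf c s0 r0 L1 N1 K1 L2 N2 K2 f1 f2 * (K2 f2 v / (L2 f2 v * v ^ c.nu)))))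

/-- `Φ2(η; f1,f2)`. -/
def Phi2f (c : Cst) (s0 r0 : ℝ) (L1 N1 K1 L2 N2 K2 : (ℝ → ℝ) → ℝ → ℝ) (f1 f2 : ℝ → ℝ)
    (η : ℝ) : ℝ :=
  ∫ v in r0..η, E2f c s0 r0 L1 N1 K1 L2 N2 K2 f1 f2 v / (L2 f2 v * v ^ c.nu)

/-- `Φ2(∞; f1,f2)`. -/
def Phi2I (c : Cst) (s0 r0 : ℝ) (L1 N1 K1 L2 N2 K2 : (ℝ → ℝ) → ℝ → ℝ) (f1 f2 : ℝ → ℝ) : ℝ :=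
  ∫ v in Set.Ioi r0, E2f c s0 r0 L1 N1 K1 L2 N2 K2 f1 f2 v / (L2 f2 v * v ^ c.nu)

/-- `H2(η; f1,f2)`. -/
def H2f (c : Cst) (s0 r0 : ℝ) (L1 N1 K1 L2 N2 K2 : (ℝ → ℝ) → ℝ → ℝ) (f1 f2 : ℝ → ℝ)
    (η : ℝ) : ℝ :=
  ∫ v in r0..η, K2 f2 v / (v ^ c.nu * E2f c s0 r0 L1 N1 K1 L2 N2 K2 f1 f2 v)

/-- `G2(η; f1,f2)`. -/
def G2f (c : Cst) (s0 r0 : ℝ) (L1 N1 K1 L2 N2 K2 : (ℝ → ℝ) → ℝ → ℝ) (f1 f2 : ℝ → ℝ)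
    (η : ℝ) : ℝ :=
  ∫ v in r0..η, E2f c s0 r0 L1 N1 K1 L2 N2 K2 f1 f2 v
    * H2f c s0 r0 L1 N1 K1 L2 N2 K2 f1 f2 v / (L2 f2 v * v ^ c.nu)

/-- `G2(∞; f1,f2) = lim_{η→∞} G2(η; f1,f2)`. -/
def G2I (c : Cst) (s0 r0 : ℝ) (L1 N1 K1 L2 N2 K2 : (ℝ → ℝ) → ℝ → ℝ) (f1 f2 : ℝ → ℝ) : ℝ :=
  limUnder atTop (G2f c s0 r0 L1 N1 K1 L2 N2 K2 f1 f2)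

/-- `V2(f1,f2)(η)`. -/
def V2f (c : Cst) (s0 r0 : ℝ) (L1 N1 K1 L2 N2 K2 : (ℝ → ℝ) → ℝ → ℝ) (f1 f2 : ℝ → ℝ)
    (η : ℝ) : ℝ :=
  (c.D2s / Hf c s0 r0 L1 N1 K1 L2 N2 K2 f1 f2 ^ 2 * G2I c s0 r0 L1 N1 K1 L2 N2 K2 f1 f2 - 1)
      * (Phi2f c s0 r0 L1 N1 K1 L2 N2 K2 f1 f2 η / Phi2I c s0 r0 L1 N1 K1 L2 N2 K2 f1 f2)
    - c.D2s / Hf c s0 r0 L1 N1 K1 L2 N2 K2 f1 f2 ^ 2 * G2f c s0 r0 L1 N1 K1 L2 N2 K2 f1 f2 η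

/-! Constants appearing in the estimates. -/

def Hinf (c : Cst) (s0 r0 : ℝ) : ℝ :=
  c.K1m / (c.mu + c.nu - 1) * (s0 ^ (-(c.mu + c.nu - 1)) - r0 ^ (-(c.mu + c.nu - 1)))

def Hsup (c : Cst) (s0 r0 : ℝ) : ℝ :=
  (c.K1M * s0 ^ (-(c.mu + c.nu - 1)) + c.K2M * r0 ^ (-(c.mu + c.nu - 1))) / (c.mu + c.nu - 1)

def Htil (c : Cst) (s0 r0 : ℝ) : ℝ :=
  (c.Kt1 * s0 ^ (-(c.mu + c.nu - 1)) + c.Kt2 * r0 ^ (-(c.mu + c.nu - 1))) / (c.mu + c.nu - 1)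

/-- Limit of `Hinf` as `r0 → ∞`. -/
def HinfI (c : Cst) (s0 : ℝ) : ℝ := c.K1m / (c.mu + c.nu - 1) * s0 ^ (-(c.mu + c.nu - 1))

/-- Limit of `Hsup` as `r0 → ∞`. -/
def HsupI (c : Cst) (s0 : ℝ) : ℝ := c.K1M * s0 ^ (-(c.mu + c.nu - 1)) / (c.mu + c.nu - 1)

/-- Limit of `Htil` as `r0 → ∞`. -/
def HtilI (c : Cst) (s0 : ℝ) : ℝ := c.Kt1 * s0 ^ (-(c.mu + c.nu - 1)) / (c.mu + c.nu - 1)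

/-- `E1inf` as a function of the value `h` of `Hinf`. -/
def E1infG (c : Cst) (s0 h : ℝ) : ℝ :=
  Real.exp (-(c.a * c.N1M / (c.L1m * (c.mu - 1) * s0 ^ (2 * c.mu - 2))
    + c.D1 * c.K1M / (h * c.L1m * (2 * c.mu + c.nu - 1) * s0 ^ (2 * c.mu + c.nu - 1))))

/-- `Ẽ1` as a function of the values `h` of `Hinf` and `ht` of `Htil`. -/
def E1tilG (c : Cst) (s0 h ht : ℝ) : ℝ :=
  2 * c.a * (c.Nt1 / (c.L1m * (c.mu - 2) * s0 ^ (c.mu - 2))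
      + c.N1M * c.Lt1 / (c.L1m ^ 2 * (3 * c.mu - 2) * s0 ^ (3 * c.mu - 2)))
    + c.D1 * (c.Kt1 / (h * c.L1m * (2 * c.mu + c.nu - 1) * s0 ^ (2 * c.mu + c.nu - 1))
      + c.K1M / (h * c.L1m)
        * (ht / (h * (2 * c.mu + c.nu - 1) * s0 ^ (2 * c.mu + c.nu - 1))
          + c.Lt1 / (c.L1m * (3 * c.mu + c.nu - 1) * s0 ^ (3 * c.mu + c.nu - 1))))

def Phi1tilG (c : Cst) (s0 h ht : ℝ) : ℝ :=
  E1tilG c s0 h ht / (c.L1m * (c.mu + c.nu - 1) * s0 ^ (c.mu + c.nu - 1))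
    + c.Lt1 / (c.L1m ^ 2 * (2 * c.mu + c.nu - 1) * s0 ^ (2 * c.mu + c.nu - 1))

def H1supG (c : Cst) (s0 h : ℝ) : ℝ :=
  c.K1M / (E1infG c s0 h * (c.mu + c.nu - 1) * s0 ^ (c.mu + c.nu - 1))

def H1tilG (c : Cst) (s0 h ht : ℝ) : ℝ :=
  (c.Kt1 + c.K1M * E1tilG c s0 h ht / E1infG c s0 h)
    / (E1infG c s0 h * (c.mu + c.nu - 1) * s0 ^ (c.mu + c.nu - 1))

def G1supG (c : Cst) (s0 h : ℝ) : ℝ :=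
  H1supG c s0 h / (c.L1m * (c.mu + c.nu - 1) * s0 ^ (c.mu + c.nu - 1))

def G1tilG (c : Cst) (s0 h ht : ℝ) : ℝ :=
  H1supG c s0 h * Phi1tilG c s0 h ht
    + H1tilG c s0 h ht / (c.L1m * (c.mu + c.nu - 1) * s0 ^ (c.mu + c.nu - 1))

/-- `ε1` as a function of the values `h` of `Hinf`, `hs` of `Hsup`, `ht` of `Htil`. -/
def eps1G (c : Cst) (s0 h hs ht : ℝ) : ℝ :=
  2 * s0 ^ c.nu * c.Q * Real.exp (-s0 ^ 2) * Phi1tilG c s0 h ht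
    + 2 * c.D1s * (2 * G1supG c s0 h * hs * ht / h ^ 4 + G1tilG c s0 h ht / h ^ 2)

def E1inf (c : Cst) (s0 r0 : ℝ) : ℝ := E1infG c s0 (Hinf c s0 r0)
def E1til (c : Cst) (s0 r0 : ℝ) : ℝ := E1tilG c s0 (Hinf c s0 r0) (Htil c s0 r0)
def Phi1til (c : Cst) (s0 r0 : ℝ) : ℝ := Phi1tilG c s0 (Hinf c s0 r0) (Htil c s0 r0)
def H1sup (c : Cst) (s0 r0 : ℝ) : ℝ := H1supG c s0 (Hinf c s0 r0)
def H1til (c : Cst) (s0 r0 : ℝ) : ℝ := H1tilG c s0 (Hinf c s0 r0) (Htil c s0 r0)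
def G1sup (c : Cst) (s0 r0 : ℝ) : ℝ := G1supG c s0 (Hinf c s0 r0)
def G1til (c : Cst) (s0 r0 : ℝ) : ℝ := G1tilG c s0 (Hinf c s0 r0) (Htil c s0 r0)
def eps1 (c : Cst) (s0 r0 : ℝ) : ℝ := eps1G c s0 (Hinf c s0 r0) (Hsup c s0 r0) (Htil c s0 r0)

/-- `j1(s0) = lim_{r0→∞} ε1(r0,s0)`: the same expression with `Hinf, Hsup, Htil`
replaced by their limits as `r0 → ∞`. -/
def j1 (c : Cst) (s0 : ℝ) : ℝ := eps1G c s0 (HinfI c s0) (HsupI c s0) (HtilI c s0)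

def E2inf (c : Cst) (s0 r0 : ℝ) : ℝ :=
  Real.exp (-(c.a * c.N2M / (c.L2m * (c.mu - 1) * r0 ^ (2 * c.mu - 2))
    + c.D2 * c.K2M / (Hinf c s0 r0 * c.L2m * (2 * c.mu + c.nu - 1) * r0 ^ (2 * c.mu + c.nu - 1))))

def E2til (c : Cst) (s0 r0 : ℝ) : ℝ :=
  2 * c.a * (c.Nt2 / (c.L2m * (c.mu - 2) * r0 ^ (c.mu - 2))
      + c.N2M * c.Lt2 / (c.L2m ^ 2 * (3 * c.mu - 2) * r0 ^ (3 * c.mu - 2)))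
    + c.D2 * (c.Kt2 / (Hinf c s0 r0 * c.L2m * (2 * c.mu + c.nu - 1) * r0 ^ (2 * c.mu + c.nu - 1))
      + c.K2M / (Hinf c s0 r0 * c.L2m)
        * (Htil c s0 r0 / (Hinf c s0 r0 * (2 * c.mu + c.nu - 1) * r0 ^ (2 * c.mu + c.nu - 1))
          + c.Lt2 / (c.L2m * (3 * c.mu + c.nu - 1) * r0 ^ (3 * c.mu + c.nu - 1))))

def Phi2til (c : Cst) (s0 r0 : ℝ) : ℝ :=
  E2til c s0 r0 / (c.L2m * (c.mu + c.nu - 1) * r0 ^ (c.mu + c.nu - 1))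
    + c.Lt2 / (c.L2m ^ 2 * (2 * c.mu + c.nu - 1) * r0 ^ (2 * c.mu + c.nu - 1))

/-- `Φ2inf(∞)(r0,s0)`. -/
def Phi2infC (c : Cst) (s0 r0 : ℝ) : ℝ :=
  E2inf c s0 r0 / (c.L2M * (c.mu + c.nu - 1) * r0 ^ (c.mu + c.nu - 1))

/-- `Φ2sup(r0)`. -/
def Phi2supC (c : Cst) (r0 : ℝ) : ℝ := 1 / (c.L2m * (c.mu + c.nu - 1) * r0 ^ (c.mu + c.nu - 1))

def H2sup (c : Cst) (s0 r0 : ℝ) : ℝ :=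
  c.K2M / (E2inf c s0 r0 * (c.mu + c.nu - 1) * r0 ^ (c.mu + c.nu - 1))

def H2til (c : Cst) (s0 r0 : ℝ) : ℝ :=
  (c.Kt2 + c.K2M * E2til c s0 r0 / E2inf c s0 r0)
    / (E2inf c s0 r0 * (c.mu + c.nu - 1) * r0 ^ (c.mu + c.nu - 1))

def G2sup (c : Cst) (s0 r0 : ℝ) : ℝ :=
  H2sup c s0 r0 / (c.L2m * (c.mu + c.nu - 1) * r0 ^ (c.mu + c.nu - 1))

def G2til (c : Cst) (s0 r0 : ℝ) : ℝ :=
  H2sup c s0 r0 * Phi2til c s0 r0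
    + H2til c s0 r0 / (c.L2m * (c.mu + c.nu - 1) * r0 ^ (c.mu + c.nu - 1))

def eps21 (c : Cst) (s0 r0 : ℝ) : ℝ := 2 * Phi2til c s0 r0 / Phi2infC c s0 r0

def eps22 (c : Cst) (s0 r0 : ℝ) : ℝ :=
  G2til c s0 r0 / Hinf c s0 r0 ^ 2
    + 2 * G2sup c s0 r0 * Hsup c s0 r0 * Htil c s0 r0 / Hinf c s0 r0 ^ 4

def eps23 (c : Cst) (s0 r0 : ℝ) : ℝ :=
  Phi2supC c r0 / Phi2infC c s0 r0 * eps22 c s0 r0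
    + G2sup c s0 r0 / Hinf c s0 r0 ^ 2 * eps21 c s0 r0

def eps2 (c : Cst) (s0 r0 : ℝ) : ℝ := eps21 c s0 r0 + eps22 c s0 r0 + eps23 c s0 r0



/-! ### Auxiliary lemmas for the proof of `stmt6` -/

lemma contOn_rpow {x y e : ℝ} (hx : 0 < x) :
    ContinuousOn (fun v : ℝ => v ^ e) (Set.Icc x y) := fun v hv =>
  (Real.continuousAt_rpow_const v e (Or.inl (ne_of_gt (lt_of_lt_of_le hx hv.1)))).continuousWithinAt

lemma int_rpow_eq {x y q : ℝ} (hx : 0 < x) (hxy : x ≤ y) (hq : 0 < q) :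
    ∫ v in x..y, v ^ (-q - 1) = (x ^ (-q) - y ^ (-q)) / q := by
  rw [integral_rpow (Or.inr ⟨by intro h; nlinarith, by
    rw [Set.uIcc_of_le hxy]; intro h; exact absurd h.1 (by linarith)⟩)]
  have h1 : -q - 1 + 1 = -q := by ring
  rw [h1]
  ring

lemma int_le_of_le {x y q b : ℝ} (hx : 0 < x) (hxy : x ≤ y) (hq : 0 < q)
    {F : ℝ → ℝ} (hF : ContinuousOn F (Set.Icc x y))
    (hbd : ∀ v ∈ Set.Icc x y, F v ≤ b * v ^ (-q - 1)) :
    ∫ v in x..y, F v ≤ b * ((x ^ (-q) - y ^ (-q)) / q) := by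
  have h1 : (∫ v in x..y, F v) ≤ ∫ v in x..y, b * v ^ (-q - 1) := by
    apply intervalIntegral.integral_mono_on hxy
    · exact (hF.mono (by rw [Set.uIcc_of_le hxy])).intervalIntegrable
    · exact ((contOn_rpow hx).const_smul b |>.mono (by rw [Set.uIcc_of_le hxy])).intervalIntegrable
    · exact hbd
  calc (∫ v in x..y, F v) ≤ ∫ v in x..y, b * v ^ (-q - 1) := h1
    _ = b * ((x ^ (-q) - y ^ (-q)) / q) := by
        rw [intervalIntegral.integral_const_mul, int_rpow_eq hx hxy hq]

lemma int_ge_of_ge {x y q b : ℝ} (hx : 0 < x) (hxy : x ≤ y) (hq : 0 < q)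
    {F : ℝ → ℝ} (hF : ContinuousOn F (Set.Icc x y))
    (hbd : ∀ v ∈ Set.Icc x y, b * v ^ (-q - 1) ≤ F v) :
    b * ((x ^ (-q) - y ^ (-q)) / q) ≤ ∫ v in x..y, F v := by
  have h1 : (∫ v in x..y, b * v ^ (-q - 1)) ≤ ∫ v in x..y, F v := by
    apply intervalIntegral.integral_mono_on hxy
    · exact ((contOn_rpow hx).const_smul b |>.mono (by rw [Set.uIcc_of_le hxy])).intervalIntegrable
    · exact (hF.mono (by rw [Set.uIcc_of_le hxy])).intervalIntegrable
    · exact hbd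
  calc b * ((x ^ (-q) - y ^ (-q)) / q)
      = ∫ v in x..y, b * v ^ (-q - 1) := by
        rw [intervalIntegral.integral_const_mul, int_rpow_eq hx hxy hq]
    _ ≤ ∫ v in x..y, F v := h1

lemma int_le_of_le2 {x y q1 q2 b1 b2 : ℝ} (hx : 0 < x) (hxy : x ≤ y) (hq1 : 0 < q1)
    (hq2 : 0 < q2) {F : ℝ → ℝ} (hF : ContinuousOn F (Set.Icc x y))
    (hbd : ∀ v ∈ Set.Icc x y, F v ≤ b1 * v ^ (-q1 - 1) + b2 * v ^ (-q2 - 1)) :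
    ∫ v in x..y, F v
      ≤ b1 * ((x ^ (-q1) - y ^ (-q1)) / q1) + b2 * ((x ^ (-q2) - y ^ (-q2)) / q2) := by
  have hi1 : IntervalIntegrable (fun v : ℝ => b1 * v ^ (-q1 - 1)) MeasureTheory.volume x y :=
    ((contOn_rpow hx).const_smul b1 |>.mono (by rw [Set.uIcc_of_le hxy])).intervalIntegrable
  have hi2 : IntervalIntegrable (fun v : ℝ => b2 * v ^ (-q2 - 1)) MeasureTheory.volume x y :=
    ((contOn_rpow hx).const_smul b2 |>.mono (by rw [Set.uIcc_of_le hxy])).intervalIntegrable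
  have h1 : (∫ v in x..y, F v) ≤ ∫ v in x..y, (b1 * v ^ (-q1 - 1) + b2 * v ^ (-q2 - 1)) := by
    apply intervalIntegral.integral_mono_on hxy
    · exact (hF.mono (by rw [Set.uIcc_of_le hxy])).intervalIntegrable
    · exact hi1.add hi2
    · exact hbd
  calc (∫ v in x..y, F v) ≤ ∫ v in x..y, (b1 * v ^ (-q1 - 1) + b2 * v ^ (-q2 - 1)) := h1
    _ = b1 * ((x ^ (-q1) - y ^ (-q1)) / q1) + b2 * ((x ^ (-q2) - y ^ (-q2)) / q2) := by
        rw [intervalIntegral.integral_add hi1 hi2, intervalIntegral.integral_const_mul,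
          intervalIntegral.integral_const_mul, int_rpow_eq hx hxy hq1, int_rpow_eq hx hxy hq2]

/-- The integrand appearing in the exponential defining `E1f`. -/
def g1aux (c : Cst) (s0 r0 : ℝ) (L1 N1 K1 L2 N2 K2 : (ℝ → ℝ) → ℝ → ℝ) (f1 f2 : ℝ → ℝ)
    (v : ℝ) : ℝ :=
  2 * c.a * v * (N1 f1 v / L1 f1 v)
    + c.D1 / Hf c s0 r0 L1 N1 K1 L2 N2 K2 f1 f2 * (K1 f1 v / (L1 f1 v * v ^ c.nu))

lemma E1f_eq (c : Cst) (s0 r0 : ℝ) (L1 N1 K1 L2 N2 K2 : (ℝ → ℝ) → ℝ → ℝ) (f1 f2 : ℝ → ℝ)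
    (η : ℝ) :
    E1f c s0 r0 L1 N1 K1 L2 N2 K2 f1 f2 η
      = Real.exp (-(∫ v in s0..η, g1aux c s0 r0 L1 N1 K1 L2 N2 K2 f1 f2 v)) := rfl


theorem stmt6 (c : Cst) (s0 r0 : ℝ) (L1 N1 K1 L2 N2 K2 : (ℝ → ℝ) → ℝ → ℝ)
    (hpos : PosC c s0 r0) (hA : Assum c s0 r0 L1 N1 K1 L2 N2 K2)
    (f1 f2 : ℝ → ℝ) (hf1 : f1 ∈ C1 s0 r0) (hf2 : f2 ∈ Mset r0) :
    ∀ η ∈ Set.Icc s0 r0,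
      c.K1m / (c.mu + c.nu - 1) * (s0 ^ (-(c.mu + c.nu - 1)) - η ^ (-(c.mu + c.nu - 1)))
          ≤ H1f c s0 r0 L1 N1 K1 L2 N2 K2 f1 f2 η ∧
        H1f c s0 r0 L1 N1 K1 L2 N2 K2 f1 f2 η ≤ H1sup c s0 r0 := by
  have hpos' := hpos
  unfold PosC at hpos'
  obtain ⟨ha, hnu0, hnu1, hmu, hs0, hsr, hD1, hD2, hQ, hD1s, hD2s, hL1m, hL1M, hN1m, hN1M,
    hK1m, hK1M, hL2m, hL2M, hN2m, hN2M, hK2m, hK2M, hrest⟩ := hpos'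
  have hA' := hA
  unfold Assum at hA'
  obtain ⟨hAc1, hAc2, hA1, hA2, hA3, hA4⟩ := hA'
  obtain ⟨cL, cN, cK⟩ := hAc1 f1 hf1
  have hr0 : 0 < r0 := hs0.trans hsr
  have hp : (0:ℝ) < c.mu + c.nu - 1 := by linarith
  have hq1 : (0:ℝ) < 2 * c.mu - 2 := by linarith
  have hq2 : (0:ℝ) < 2 * c.mu + c.nu - 1 := by linarith
  have hvpos : ∀ v ∈ Set.Icc s0 r0, (0:ℝ) < v := fun v hv => lt_of_lt_of_le hs0 hv.1
  have hLpos : ∀ v ∈ Set.Icc s0 r0, 0 < L1 f1 v := fun v hv =>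
    lt_of_lt_of_le (mul_pos hL1m (Real.rpow_pos_of_pos (hvpos v hv) _)) (hA1 f1 hf1 v hv).1
  have hNpos : ∀ v ∈ Set.Icc s0 r0, 0 < N1 f1 v := fun v hv =>
    lt_of_lt_of_le (mul_pos hN1m (Real.rpow_pos_of_pos (hvpos v hv) _)) (hA1 f1 hf1 v hv).2.2.1
  have hKpos : ∀ v ∈ Set.Icc s0 r0, 0 < K1 f1 v := fun v hv =>
    lt_of_lt_of_le (mul_pos hK1m (Real.rpow_pos_of_pos (hvpos v hv) _))
      (hA1 f1 hf1 v hv).2.2.2.2.1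
  have hrs : r0 ^ (-(c.mu + c.nu - 1)) < s0 ^ (-(c.mu + c.nu - 1)) :=
    (Real.rpow_lt_rpow_iff_of_neg hr0 hs0 (by linarith)).mpr hsr
  have hHinfpos : 0 < Hinf c s0 r0 := by
    unfold Hinf
    exact mul_pos (div_pos hK1m hp) (sub_pos.mpr hrs)
  -- `Hinf ≤ Hf`
  have hI1 : c.K1m * ((s0 ^ (-(c.mu + c.nu - 1)) - r0 ^ (-(c.mu + c.nu - 1))) / (c.mu + c.nu - 1))
      ≤ ∫ v in s0..r0, K1 f1 v / v ^ c.nu := by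
    apply int_ge_of_ge hs0 hsr.le hp
    · exact cK.div (contOn_rpow hs0)
        (fun v hv => (Real.rpow_pos_of_pos (hvpos v hv) _).ne')
    · intro v hv
      have hv0 := hvpos v hv
      have he : -(c.mu + c.nu - 1) - 1 = -c.mu - c.nu := by ring
      rw [he, Real.rpow_sub hv0, ← mul_div_assoc]
      exact (div_le_div_iff_of_pos_right (Real.rpow_pos_of_pos hv0 _)).mpr (hA1 f1 hf1 v hv).2.2.2.2.1
  have hI2 : 0 ≤ ∫ v in Set.Ioi r0, K2 f2 v / v ^ c.nu := by
    apply MeasureTheory.setIntegral_nonneg measurableSet_Ioi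
    intro v hv
    have hv0 : 0 < v := hr0.trans hv
    have hK2 : 0 < K2 f2 v :=
      lt_of_lt_of_le (mul_pos hK2m (Real.rpow_pos_of_pos hv0 _))
        (hA2 f2 hf2 v (Set.Ioi_subset_Ici_self hv)).2.2.2.2.1
    exact div_nonneg hK2.le (Real.rpow_nonneg hv0.le _)
  have hHge : Hinf c s0 r0 ≤ Hf c s0 r0 L1 N1 K1 L2 N2 K2 f1 f2 := by
    have heq : Hinf c s0 r0
        = c.K1m * ((s0 ^ (-(c.mu + c.nu - 1)) - r0 ^ (-(c.mu + c.nu - 1))) / (c.mu + c.nu - 1)) := by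
      unfold Hinf; ring
    unfold Hf
    linarith [hI1, hI2]
  have hHpos : 0 < Hf c s0 r0 L1 N1 K1 L2 N2 K2 f1 f2 := lt_of_lt_of_le hHinfpos hHge
  -- continuity of the integrand `g1aux`
  have hgcont : ContinuousOn (g1aux c s0 r0 L1 N1 K1 L2 N2 K2 f1 f2) (Set.Icc s0 r0) := by
    unfold g1aux
    apply ContinuousOn.add
    · exact (continuousOn_const.mul continuousOn_id).mul
        (cN.div cL (fun v hv => (hLpos v hv).ne'))
    · exact continuousOn_const.mul (cK.div (cL.mul (contOn_rpow hs0))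
        (fun v hv => (mul_pos (hLpos v hv) (Real.rpow_pos_of_pos (hvpos v hv) _)).ne'))
  -- nonnegativity of `g1aux`
  have hg0 : ∀ v ∈ Set.Icc s0 r0, 0 ≤ g1aux c s0 r0 L1 N1 K1 L2 N2 K2 f1 f2 v := by
    intro v hv
    have hv0 := hvpos v hv
    unfold g1aux
    have h1 : 0 ≤ 2 * c.a * v * (N1 f1 v / L1 f1 v) :=
      mul_nonneg (mul_nonneg (by positivity) hv0.le)
        (div_nonneg (hNpos v hv).le (hLpos v hv).le)
    have h2 : 0 ≤ c.D1 / Hf c s0 r0 L1 N1 K1 L2 N2 K2 f1 f2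
        * (K1 f1 v / (L1 f1 v * v ^ c.nu)) :=
      mul_nonneg (div_nonneg hD1.le hHpos.le)
        (div_nonneg (hKpos v hv).le
          (mul_nonneg (hLpos v hv).le (Real.rpow_nonneg hv0.le _)))
    linarith
  -- pointwise upper bound on `g1aux`
  have hgle : ∀ u ∈ Set.Icc s0 r0, g1aux c s0 r0 L1 N1 K1 L2 N2 K2 f1 f2 u
      ≤ (2 * c.a * c.N1M / c.L1m) * u ^ (-(2 * c.mu - 2) - 1)
        + (c.D1 * c.K1M / (Hinf c s0 r0 * c.L1m)) * u ^ (-(2 * c.mu + c.nu - 1) - 1) := by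
    intro u hu
    have hu0 := hvpos u hu
    obtain ⟨hL1l, hL1u, hN1l, hN1u, hK1l, hK1u⟩ := hA1 f1 hf1 u hu
    have hLp := hLpos u hu
    have humu : (0:ℝ) < u ^ c.mu := Real.rpow_pos_of_pos hu0 _
    have hunu : (0:ℝ) < u ^ c.nu := Real.rpow_pos_of_pos hu0 _
    have e1 : u ^ (-(2 * c.mu - 2) - 1) = u * u ^ (-c.mu) / u ^ c.mu := by
      rw [show -(2 * c.mu - 2) - 1 = (1 + -c.mu) - c.mu by ring, Real.rpow_sub hu0,
        Real.rpow_add hu0, Real.rpow_one]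
    have e2 : u ^ (-(2 * c.mu + c.nu - 1) - 1) = u ^ (-c.mu) / (u ^ c.mu * u ^ c.nu) := by
      rw [show -(2 * c.mu + c.nu - 1) - 1 = -c.mu - (c.mu + c.nu) by ring, Real.rpow_sub hu0,
        Real.rpow_add hu0]
    have t1 : 2 * c.a * u * (N1 f1 u / L1 f1 u)
        ≤ (2 * c.a * c.N1M / c.L1m) * u ^ (-(2 * c.mu - 2) - 1) := by
      have hd : N1 f1 u / L1 f1 u ≤ (c.N1M * u ^ (-c.mu)) / (c.L1m * u ^ c.mu) :=
        div_le_div₀ (mul_nonneg hN1M.le (Real.rpow_nonneg hu0.le _)) hN1u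
          (mul_pos hL1m humu) hL1l
      calc 2 * c.a * u * (N1 f1 u / L1 f1 u)
          ≤ 2 * c.a * u * ((c.N1M * u ^ (-c.mu)) / (c.L1m * u ^ c.mu)) := by
            apply mul_le_mul_of_nonneg_left hd
            exact mul_nonneg (by positivity) hu0.le
        _ = (2 * c.a * c.N1M / c.L1m) * u ^ (-(2 * c.mu - 2) - 1) := by
            rw [e1]
            field_simp
    have t2 : c.D1 / Hf c s0 r0 L1 N1 K1 L2 N2 K2 f1 f2 * (K1 f1 u / (L1 f1 u * u ^ c.nu))
        ≤ (c.D1 * c.K1M / (Hinf c s0 r0 * c.L1m)) * u ^ (-(2 * c.mu + c.nu - 1) - 1) := by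
      have hd1 : c.D1 / Hf c s0 r0 L1 N1 K1 L2 N2 K2 f1 f2 ≤ c.D1 / Hinf c s0 r0 :=
        div_le_div_of_nonneg_left hD1.le hHinfpos hHge
      have hd2 : K1 f1 u / (L1 f1 u * u ^ c.nu)
          ≤ (c.K1M * u ^ (-c.mu)) / (c.L1m * u ^ c.mu * u ^ c.nu) := by
        apply div_le_div₀ (mul_nonneg hK1M.le (Real.rpow_nonneg hu0.le _)) hK1u
          (mul_pos (mul_pos hL1m humu) hunu)
        exact mul_le_mul_of_nonneg_right hL1l hunu.le
      calc c.D1 / Hf c s0 r0 L1 N1 K1 L2 N2 K2 f1 f2 * (K1 f1 u / (L1 f1 u * u ^ c.nu))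
          ≤ c.D1 / Hinf c s0 r0 * ((c.K1M * u ^ (-c.mu)) / (c.L1m * u ^ c.mu * u ^ c.nu)) := by
            apply mul_le_mul hd1 hd2
            · exact div_nonneg (hKpos u hu).le (mul_nonneg hLp.le hunu.le)
            · exact div_nonneg hD1.le hHinfpos.le
        _ = (c.D1 * c.K1M / (Hinf c s0 r0 * c.L1m)) * u ^ (-(2 * c.mu + c.nu - 1) - 1) := by
            rw [e2]
            field_simp
    unfold g1aux
    linarith
  -- bound on the primitive of `g1aux`
  have hIbound : ∀ v ∈ Set.Icc s0 r0,
      (∫ u in s0..v, g1aux c s0 r0 L1 N1 K1 L2 N2 K2 f1 f2 u)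
        ≤ c.a * c.N1M / (c.L1m * (c.mu - 1) * s0 ^ (2 * c.mu - 2))
          + c.D1 * c.K1M
            / (Hinf c s0 r0 * c.L1m * (2 * c.mu + c.nu - 1) * s0 ^ (2 * c.mu + c.nu - 1)) := by
    intro v hv
    have hsv : s0 ≤ v := hv.1
    have hsub : Set.Icc s0 v ⊆ Set.Icc s0 r0 := Set.Icc_subset_Icc le_rfl hv.2
    have h1 := int_le_of_le2 (b1 := 2 * c.a * c.N1M / c.L1m)
      (b2 := c.D1 * c.K1M / (Hinf c s0 r0 * c.L1m)) hs0 hsv hq1 hq2 (hgcont.mono hsub)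
      (fun u hu => hgle u (hsub hu))
    have hv0 : (0:ℝ) < v := lt_of_lt_of_le hs0 hsv
    have hb1 : (0:ℝ) ≤ 2 * c.a * c.N1M / c.L1m := by positivity
    have hb2 : (0:ℝ) ≤ c.D1 * c.K1M / (Hinf c s0 r0 * c.L1m) := by positivity
    have hv1 : (0:ℝ) ≤ v ^ (-(2 * c.mu - 2)) := Real.rpow_nonneg hv0.le _
    have hv2 : (0:ℝ) ≤ v ^ (-(2 * c.mu + c.nu - 1)) := Real.rpow_nonneg hv0.le _
    have h2 : (2 * c.a * c.N1M / c.L1m) * ((s0 ^ (-(2 * c.mu - 2)) - v ^ (-(2 * c.mu - 2))) / (2 * c.mu - 2))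
        ≤ (2 * c.a * c.N1M / c.L1m) * (s0 ^ (-(2 * c.mu - 2)) / (2 * c.mu - 2)) := by
      apply mul_le_mul_of_nonneg_left _ hb1
      exact (div_le_div_iff_of_pos_right hq1).mpr (by linarith)
    have h3 : (c.D1 * c.K1M / (Hinf c s0 r0 * c.L1m))
          * ((s0 ^ (-(2 * c.mu + c.nu - 1)) - v ^ (-(2 * c.mu + c.nu - 1))) / (2 * c.mu + c.nu - 1))
        ≤ (c.D1 * c.K1M / (Hinf c s0 r0 * c.L1m))
          * (s0 ^ (-(2 * c.mu + c.nu - 1)) / (2 * c.mu + c.nu - 1)) := by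
      apply mul_le_mul_of_nonneg_left _ hb2
      exact (div_le_div_iff_of_pos_right hq2).mpr (by linarith)
    have hs1 : (0:ℝ) < s0 ^ (2 * c.mu - 2) := Real.rpow_pos_of_pos hs0 _
    have hs2 : (0:ℝ) < s0 ^ (2 * c.mu + c.nu - 1) := Real.rpow_pos_of_pos hs0 _
    have e3 : (2 * c.a * c.N1M / c.L1m) * (s0 ^ (-(2 * c.mu - 2)) / (2 * c.mu - 2))
        = c.a * c.N1M / (c.L1m * (c.mu - 1) * s0 ^ (2 * c.mu - 2)) := by
      have hmu1 : c.mu - 1 ≠ 0 := ne_of_gt (by linarith)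
      rw [Real.rpow_neg hs0.le]
      field_simp [hmu1, hL1m.ne', hs1.ne', hq1.ne']
    have e4 : (c.D1 * c.K1M / (Hinf c s0 r0 * c.L1m))
          * (s0 ^ (-(2 * c.mu + c.nu - 1)) / (2 * c.mu + c.nu - 1))
        = c.D1 * c.K1M
            / (Hinf c s0 r0 * c.L1m * (2 * c.mu + c.nu - 1) * s0 ^ (2 * c.mu + c.nu - 1)) := by
      rw [Real.rpow_neg hs0.le]
      field_simp
    linarith
  -- bounds on `E1f`
  have hEinfpos : 0 < E1infG c s0 (Hinf c s0 r0) := Real.exp_pos _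
  have hE1low : ∀ v ∈ Set.Icc s0 r0,
      E1infG c s0 (Hinf c s0 r0) ≤ E1f c s0 r0 L1 N1 K1 L2 N2 K2 f1 f2 v := by
    intro v hv
    rw [E1f_eq]
    unfold E1infG
    exact Real.exp_le_exp.mpr (neg_le_neg (hIbound v hv))
  have hE1hi : ∀ v ∈ Set.Icc s0 r0, E1f c s0 r0 L1 N1 K1 L2 N2 K2 f1 f2 v ≤ 1 := by
    intro v hv
    rw [E1f_eq, Real.exp_le_one_iff, neg_nonpos]
    exact intervalIntegral.integral_nonneg hv.1
      (fun u hu => hg0 u ⟨hu.1, le_trans hu.2 hv.2⟩)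
  have hE1pos : ∀ v : ℝ, 0 < E1f c s0 r0 L1 N1 K1 L2 N2 K2 f1 f2 v := fun v => by
    rw [E1f_eq]; exact Real.exp_pos _
  have hE1cont : ContinuousOn (E1f c s0 r0 L1 N1 K1 L2 N2 K2 f1 f2) (Set.Icc s0 r0) := by
    have hint : MeasureTheory.IntegrableOn (g1aux c s0 r0 L1 N1 K1 L2 N2 K2 f1 f2)
        (Set.uIcc s0 r0) := by
      rw [Set.uIcc_of_le hsr.le]
      exact hgcont.integrableOn_Icc
    have hc := intervalIntegral.continuousOn_primitive_interval hint
    rw [Set.uIcc_of_le hsr.le] at hc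
    have heq : E1f c s0 r0 L1 N1 K1 L2 N2 K2 f1 f2
        = fun η => Real.exp (-(∫ v in s0..η, g1aux c s0 r0 L1 N1 K1 L2 N2 K2 f1 f2 v)) := rfl
    rw [heq]
    exact Real.continuous_exp.comp_continuousOn hc.neg
  -- main estimates
  intro η hη
  have hsη : s0 ≤ η := hη.1
  have hsub : Set.Icc s0 η ⊆ Set.Icc s0 r0 := Set.Icc_subset_Icc le_rfl hη.2
  have hFcont : ContinuousOn
      (fun v => K1 f1 v / (v ^ c.nu * E1f c s0 r0 L1 N1 K1 L2 N2 K2 f1 f2 v))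
      (Set.Icc s0 η) := by
    apply ContinuousOn.div (cK.mono hsub) ((contOn_rpow hs0).mul (hE1cont.mono hsub))
    intro v hv
    exact (mul_pos (Real.rpow_pos_of_pos (hvpos v (hsub hv)) _) (hE1pos v)).ne'
  constructor
  · -- lower bound
    have hlow : c.K1m * ((s0 ^ (-(c.mu + c.nu - 1)) - η ^ (-(c.mu + c.nu - 1))) / (c.mu + c.nu - 1))
        ≤ ∫ v in s0..η, K1 f1 v / (v ^ c.nu * E1f c s0 r0 L1 N1 K1 L2 N2 K2 f1 f2 v) := by
      apply int_ge_of_ge hs0 hsη hp hFcont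
      intro v hv
      have hv' := hsub hv
      have hv0 := hvpos v hv'
      have hunu : (0:ℝ) < v ^ c.nu := Real.rpow_pos_of_pos hv0 _
      have he : -(c.mu + c.nu - 1) - 1 = -c.mu - c.nu := by ring
      rw [he, Real.rpow_sub hv0, ← mul_div_assoc]
      apply div_le_div₀ (hKpos v hv').le (hA1 f1 hf1 v hv').2.2.2.2.1
        (mul_pos hunu (hE1pos v))
      calc v ^ c.nu * E1f c s0 r0 L1 N1 K1 L2 N2 K2 f1 f2 v
          ≤ v ^ c.nu * 1 := mul_le_mul_of_nonneg_left (hE1hi v hv') hunu.le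
        _ = v ^ c.nu := mul_one _
    have heq : c.K1m / (c.mu + c.nu - 1) * (s0 ^ (-(c.mu + c.nu - 1)) - η ^ (-(c.mu + c.nu - 1)))
        = c.K1m * ((s0 ^ (-(c.mu + c.nu - 1)) - η ^ (-(c.mu + c.nu - 1))) / (c.mu + c.nu - 1)) := by
      ring
    unfold H1f
    linarith
  · -- upper bound
    have hup : (∫ v in s0..η, K1 f1 v / (v ^ c.nu * E1f c s0 r0 L1 N1 K1 L2 N2 K2 f1 f2 v))
        ≤ (c.K1M / E1infG c s0 (Hinf c s0 r0))
          * ((s0 ^ (-(c.mu + c.nu - 1)) - η ^ (-(c.mu + c.nu - 1))) / (c.mu + c.nu - 1)) := by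
      apply int_le_of_le hs0 hsη hp hFcont
      intro v hv
      have hv' := hsub hv
      have hv0 := hvpos v hv'
      have hunu : (0:ℝ) < v ^ c.nu := Real.rpow_pos_of_pos hv0 _
      have step : K1 f1 v / (v ^ c.nu * E1f c s0 r0 L1 N1 K1 L2 N2 K2 f1 f2 v)
          ≤ (c.K1M * v ^ (-c.mu)) / (v ^ c.nu * E1infG c s0 (Hinf c s0 r0)) := by
        apply div_le_div₀ (mul_nonneg hK1M.le (Real.rpow_nonneg hv0.le _))
          (hA1 f1 hf1 v hv').2.2.2.2.2 (mul_pos hunu hEinfpos)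
        exact mul_le_mul_of_nonneg_left (hE1low v hv') hunu.le
      have e : (c.K1M * v ^ (-c.mu)) / (v ^ c.nu * E1infG c s0 (Hinf c s0 r0))
          = (c.K1M / E1infG c s0 (Hinf c s0 r0)) * v ^ (-(c.mu + c.nu - 1) - 1) := by
        rw [show -(c.mu + c.nu - 1) - 1 = -c.mu - c.nu by ring, Real.rpow_sub hv0]
        field_simp
      rw [← e]
      exact step
    have hη0 : (0:ℝ) ≤ η ^ (-(c.mu + c.nu - 1)) :=
      Real.rpow_nonneg (by linarith) _
    have hsp : (0:ℝ) < s0 ^ (c.mu + c.nu - 1) := Real.rpow_pos_of_pos hs0 _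
    have h2 : (c.K1M / E1infG c s0 (Hinf c s0 r0))
          * ((s0 ^ (-(c.mu + c.nu - 1)) - η ^ (-(c.mu + c.nu - 1))) / (c.mu + c.nu - 1))
        ≤ (c.K1M / E1infG c s0 (Hinf c s0 r0))
          * (s0 ^ (-(c.mu + c.nu - 1)) / (c.mu + c.nu - 1)) := by
      apply mul_le_mul_of_nonneg_left _ (div_nonneg hK1M.le hEinfpos.le)
      exact (div_le_div_iff_of_pos_right hp).mpr (by linarith)
    have e2 : (c.K1M / E1infG c s0 (Hinf c s0 r0))
          * (s0 ^ (-(c.mu + c.nu - 1)) / (c.mu + c.nu - 1)) = H1sup c s0 r0 := by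
      have : H1sup c s0 r0 = c.K1M
          / (E1infG c s0 (Hinf c s0 r0) * (c.mu + c.nu - 1) * s0 ^ (c.mu + c.nu - 1)) := rfl
      rw [this, Real.rpow_neg hs0.le]
      field_simp
    unfold H1f
    linarith
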